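/- Let G be a game such that G + Ḡ is a next-player win under misère play, and for every follower (subposition) H of G, H + H̄ is also a next-player win under misère play. Then G + Ḡ is equivalent to 0 modulo the universe of dicot games, i.e., for every dicot game X, the misère outcome of G + Ḡ + X equals the misère outcome of X. -/

import Mathlib

universe u

namespace SetTheory

/-- Pre-games, as in the older Mathlib `SetTheory.PGame` (removed from Mathlib since). -/
inductive PGame : Type (u + 1)
  | mk : ∀ α β : Type u, (α → PGame) → (β → PGame) → PGame

namespace PGame

def LeftMoves : PGame → Type u
  | mk l _ _ _ => l

def RightMoves : PGame → Type u
  | mk _ r _ _ => r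

def moveLeft : ∀ g : PGame, LeftMoves g → PGame
  | mk _l _ L _ => L

def moveRight : ∀ g : PGame, RightMoves g → PGame
  | mk _ _r _ R => R

inductive IsOption : PGame → PGame → Prop
  | moveLeft {x : PGame} (i : x.LeftMoves) : IsOption (x.moveLeft i) x
  | moveRight {x : PGame} (i : x.RightMoves) : IsOption (x.moveRight i) x

def Subsequent : PGame → PGame → Prop :=
  Relation.TransGen IsOption

instance : Zero PGame := ⟨⟨PEmpty, PEmpty, PEmpty.elim, PEmpty.elim⟩⟩

def neg : PGame → PGame
  | ⟨l, r, L, R⟩ => ⟨r, l, fun i => neg (R i), fun i => neg (L i)⟩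

instance : Neg PGame := ⟨neg⟩

/-- Auxiliary for `add`: adds the game `x` (with left/right options additions `fL`, `fR`)
to a game `y`, by recursion on `y`. -/
def addAux (xl xr : Type u) (fL : xl → PGame → PGame) (fR : xr → PGame → PGame)
    (x : PGame) : PGame → PGame
  | mk yl yr yL yR =>
    mk (xl ⊕ yl) (xr ⊕ yr)
      (Sum.elim (fun i => fL i (mk yl yr yL yR)) (fun j => addAux xl xr fL fR x (yL j)))
      (Sum.elim (fun i => fR i (mk yl yr yL yR)) (fun j => addAux xl xr fL fR x (yR j)))

/-- Disjunctive sum of pre-games (same as the old Mathlib `PGame` addition). -/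
def add : PGame.{u} → PGame.{u} → PGame.{u}
  | mk xl xr xL xR => addAux xl xr (fun i => add (xL i)) (fun i => add (xR i)) (mk xl xr xL xR)

instance : Add PGame.{u} := ⟨add⟩

def star : PGame.{u} := ⟨PUnit, PUnit, fun _ => 0, fun _ => 0⟩

end PGame

end SetTheory

open SetTheory

namespace Sprigs

/-- Partizan games (in the lowest universe). -/
abbrev PG : Type 1 := PGame.{0}

/-- Winning predicates moving first under misère play:
`(mw G).1` = Left wins moving first; `(mw G).2` = Right wins moving first. -/
def mw : PG → Prop × Prop
  | PGame.mk α β L R =>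
    ((IsEmpty α ∨ ∃ i, ¬ (mw (L i)).2), (IsEmpty β ∨ ∃ j, ¬ (mw (R j)).1))

/-- Winning predicates moving first under normal play. -/
def nw : PG → Prop × Prop
  | PGame.mk _ _ L R => ((∃ i, ¬ (nw (L i)).2), (∃ j, ¬ (nw (R j)).1))

/-- Outcome classes. -/
inductive Outcome : Type
  | L | R | N | P
deriving DecidableEq

/-- The outcome determined by "Left wins moving first" and "Right wins moving first". -/
noncomputable def outcomeOf (wl wr : Prop) : Outcome :=
  haveI := Classical.propDecidable wl
  haveI := Classical.propDecidable wr
  if wl then (if wr then .N else .L) else (if wr then .R else .P)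

/-- Misère-play outcome. -/
noncomputable def mo (G : PG) : Outcome := outcomeOf (mw G).1 (mw G).2

/-- Normal-play outcome. -/
noncomputable def no (G : PG) : Outcome := outcomeOf (nw G).1 (nw G).2

/-- Partial order on outcomes: R < P < L and R < N < L, with P, N incomparable. -/
def Outcome.le : Outcome → Outcome → Prop
  | .R, _ => True
  | _, .L => True
  | a, b => a = b

def Outcome.lt (a b : Outcome) : Prop := Outcome.le a b ∧ a ≠ b

/-- Dicot games: every subposition has moves for both players or neither. -/
def Dicot : PG → Prop
  | PGame.mk α β L R =>
    ((IsEmpty α ∧ IsEmpty β) ∨ (Nonempty α ∧ Nonempty β)) ∧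
      (∀ i, Dicot (L i)) ∧ (∀ j, Dicot (R j))

/-- Ordinal sum `G : H`. -/
def ordSum (G : PG) : PG → PGame
  | PGame.mk α β L R =>
    PGame.mk (G.LeftMoves ⊕ α) (G.RightMoves ⊕ β)
      (Sum.elim G.moveLeft (fun a => ordSum G (L a)))
      (Sum.elim G.moveRight (fun b => ordSum G (R b)))

/-- Canonical form of a natural number as a game. -/
def natGame : ℕ → PGame
  | 0 => PGame.mk PEmpty PEmpty PEmpty.elim PEmpty.elim
  | n + 1 => PGame.mk PUnit PEmpty (fun _ => natGame n) PEmpty.elim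

/-- Canonical form of an integer as a game. -/
def intGame (m : ℤ) : PG := if 0 ≤ m then natGame m.toNat else -natGame (-m).toNat

/-- Canonical form of the dyadic rational `m / 2 ^ n` as a game. -/
def dGame : ℕ → ℤ → PGame
  | 0, m => intGame m
  | n + 1, m =>
    if m % 2 = 0 then dGame n (m / 2)
    else PGame.mk PUnit PUnit (fun _ => dGame n ((m - 1) / 2)) (fun _ => dGame n ((m + 1) / 2))

/-- A rational number is dyadic if its denominator is a power of two. -/
def IsDyadic (q : ℚ) : Prop := ∃ n : ℕ, q.den = 2 ^ n

/-- The canonical-form game of a dyadic rational. -/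
def qGame (q : ℚ) : PG := dGame (Nat.log 2 q.den) q.num

/-- The Sprig `* : x` for a dyadic rational `x`. -/
def sprig (q : ℚ) : PG := ordSum PGame.star (qGame q)

/-- The Sprig `* : x̄` where `x̄` is the conjugate of the dyadic rational `x`. -/
def sprigNeg (q : ℚ) : PG := ordSum PGame.star (-qGame q)

/-- Disjunctive sum of a list of games. -/
def listSum (l : List PG) : PG := l.foldr (· + ·) 0

/-- The position `(X, Y) = Σ_{x ∈ X} *:x + Σ_{y ∈ Y} *:(-y)`. -/
def sprigsGame (X Y : List ℚ) : PG := listSum (X.map sprig ++ Y.map sprigNeg)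

/-- The minimum of a nonempty multiset of rationals (0 for the empty multiset). -/
noncomputable def mmin (s : Multiset ℚ) : ℚ :=
  if h : s = 0 then 0 else
    s.toFinset.min' (by rwa [Multiset.toFinset_nonempty])

/-- The edge `ε` computed from the reduced multisets `X' = X \ Y` and `Y' = Y \ X`. -/
noncomputable def edge (X Y : Multiset ℚ) : ℚ :=
  if X - Y = 0 ∨ Y - X = 0 then 0 else mmin (X - Y) - mmin (Y - X)

/-- The universe `S` of finite sums of Sprigs (and `*`). -/
inductive InS : PG → Prop
  | star : InS PGame.star
  | sprig {q : ℚ} (h : IsDyadic q) : InS (sprig q)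
  | sprigNeg {q : ℚ} (h : IsDyadic q) : InS (sprigNeg q)
  | add {a b : PG} : InS a → InS b → InS (a + b)

/-- A universe: a set of games closed under disjunctive sum and followers. -/
def IsUniverse (S : Set PG) : Prop :=
  (∀ a ∈ S, ∀ b ∈ S, a + b ∈ S) ∧ ∀ a ∈ S, ∀ b, PGame.Subsequent b a → b ∈ S

end Sprigs

namespace SetTheory

namespace PGame

def moveRecOn {C : PGame.{u} → Sort*} (x : PGame.{u})
    (IH : ∀ y : PGame.{u}, (∀ i, C (y.moveLeft i)) → (∀ j, C (y.moveRight j)) → C y) : C x :=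
  match x with
  | mk yl yr yL yR => IH (mk yl yr yL yR) (fun i => moveRecOn (yL i) IH) (fun j => moveRecOn (yR j) IH)

theorem Subsequent.moveLeft {x : PGame.{u}} (i : x.LeftMoves) : Subsequent (x.moveLeft i) x :=
  Relation.TransGen.single (IsOption.moveLeft i)

theorem Subsequent.moveRight {x : PGame.{u}} (j : x.RightMoves) : Subsequent (x.moveRight j) x :=
  Relation.TransGen.single (IsOption.moveRight j)

theorem Subsequent.trans {x y z : PGame.{u}} (h1 : Subsequent x y) (h2 : Subsequent y z) :
    Subsequent x z :=
  Relation.TransGen.trans h1 h2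

theorem leftMoves_add : ∀ x y : PGame.{u}, (x + y).LeftMoves = (x.LeftMoves ⊕ y.LeftMoves)
  | ⟨_, _, _, _⟩, ⟨_, _, _, _⟩ => rfl

theorem rightMoves_add : ∀ x y : PGame.{u}, (x + y).RightMoves = (x.RightMoves ⊕ y.RightMoves)
  | ⟨_, _, _, _⟩, ⟨_, _, _, _⟩ => rfl

def toLeftMovesAdd {x y : PGame.{u}} : x.LeftMoves ⊕ y.LeftMoves ≃ (x + y).LeftMoves :=
  Equiv.cast (leftMoves_add x y).symm

def toRightMovesAdd {x y : PGame.{u}} : x.RightMoves ⊕ y.RightMoves ≃ (x + y).RightMoves :=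
  Equiv.cast (rightMoves_add x y).symm

theorem add_moveLeft_inl {x : PGame.{u}} (y : PGame.{u}) (i : x.LeftMoves) :
    (x + y).moveLeft (toLeftMovesAdd (Sum.inl i)) = x.moveLeft i + y := by
  cases x; cases y; rfl

theorem add_moveRight_inl {x : PGame.{u}} (y : PGame.{u}) (i : x.RightMoves) :
    (x + y).moveRight (toRightMovesAdd (Sum.inl i)) = x.moveRight i + y := by
  cases x; cases y; rfl

theorem add_moveLeft_inr (x : PGame.{u}) {y : PGame.{u}} (i : y.LeftMoves) :
    (x + y).moveLeft (toLeftMovesAdd (Sum.inr i)) = x + y.moveLeft i := by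
  cases x; cases y; rfl

theorem add_moveRight_inr (x : PGame.{u}) {y : PGame.{u}} (i : y.RightMoves) :
    (x + y).moveRight (toRightMovesAdd (Sum.inr i)) = x + y.moveRight i := by
  cases x; cases y; rfl

theorem leftMoves_add_cases {x y : PGame.{u}} (k : (x + y).LeftMoves)
    {P : (x + y).LeftMoves → Prop}
    (hl : ∀ i, P (toLeftMovesAdd (Sum.inl i))) (hr : ∀ i, P (toLeftMovesAdd (Sum.inr i))) :
    P k := by
  rw [← toLeftMovesAdd.apply_symm_apply k]
  rcases toLeftMovesAdd.symm k with i | i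
  · exact hl i
  · exact hr i

theorem rightMoves_add_cases {x y : PGame.{u}} (k : (x + y).RightMoves)
    {P : (x + y).RightMoves → Prop}
    (hl : ∀ i, P (toRightMovesAdd (Sum.inl i))) (hr : ∀ i, P (toRightMovesAdd (Sum.inr i))) :
    P k := by
  rw [← toRightMovesAdd.apply_symm_apply k]
  rcases toRightMovesAdd.symm k with i | i
  · exact hl i
  · exact hr i

theorem leftMoves_neg (x : PGame.{u}) : (-x).LeftMoves = x.RightMoves := by
  cases x; rfl

theorem rightMoves_neg (x : PGame.{u}) : (-x).RightMoves = x.LeftMoves := by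
  cases x; rfl

def toLeftMovesNeg {x : PGame.{u}} : x.RightMoves ≃ (-x).LeftMoves :=
  Equiv.cast (leftMoves_neg x).symm

def toRightMovesNeg {x : PGame.{u}} : x.LeftMoves ≃ (-x).RightMoves :=
  Equiv.cast (rightMoves_neg x).symm

theorem moveLeft_neg {x : PGame.{u}} (i : x.RightMoves) :
    (-x).moveLeft (toLeftMovesNeg i) = -x.moveRight i := by
  cases x; rfl

theorem moveRight_neg {x : PGame.{u}} (i : x.LeftMoves) :
    (-x).moveRight (toRightMovesNeg i) = -x.moveLeft i := by
  cases x; rfl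

theorem moveLeft_neg' {x : PGame.{u}} (i : (-x).LeftMoves) :
    (-x).moveLeft i = -x.moveRight (toLeftMovesNeg.symm i) := by
  cases x; rfl

theorem moveRight_neg' {x : PGame.{u}} (i : (-x).RightMoves) :
    (-x).moveRight i = -x.moveLeft (toRightMovesNeg.symm i) := by
  cases x; rfl

end PGame

end SetTheory

namespace Sprigs

open PGame in
lemma mw1 (G : PG) : (mw G).1 ↔ (IsEmpty G.LeftMoves ∨ ∃ i, ¬ (mw (G.moveLeft i)).2) := by
  cases G; exact Iff.rfl

open PGame in
lemma mw2 (G : PG) : (mw G).2 ↔ (IsEmpty G.RightMoves ∨ ∃ j, ¬ (mw (G.moveRight j)).1) := by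
  cases G; exact Iff.rfl

lemma mw1_of_move {G : PG} (i : G.LeftMoves) (h : ¬ (mw (G.moveLeft i)).2) : (mw G).1 :=
  (mw1 G).mpr (Or.inr ⟨i, h⟩)

lemma mw2_of_move {G : PG} (j : G.RightMoves) (h : ¬ (mw (G.moveRight j)).1) : (mw G).2 :=
  (mw2 G).mpr (Or.inr ⟨j, h⟩)

lemma not_mw1 {G : PG} :
    ¬ (mw G).1 ↔ (Nonempty G.LeftMoves ∧ ∀ i, (mw (G.moveLeft i)).2) := by
  rw [mw1]; push_neg; exact Iff.rfl

lemma not_mw2 {G : PG} :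
    ¬ (mw G).2 ↔ (Nonempty G.RightMoves ∧ ∀ j, (mw (G.moveRight j)).1) := by
  rw [mw2]; push_neg; exact Iff.rfl

lemma dicot_moveLeft {X : PG} (h : Dicot X) (i : X.LeftMoves) : Dicot (X.moveLeft i) := by
  cases X; exact h.2.1 i

lemma dicot_moveRight {X : PG} (h : Dicot X) (j : X.RightMoves) : Dicot (X.moveRight j) := by
  cases X; exact h.2.2 j

lemma dicot_both {X : PG} (h : Dicot X) :
    (IsEmpty X.LeftMoves ∧ IsEmpty X.RightMoves) ∨
      (Nonempty X.LeftMoves ∧ Nonempty X.RightMoves) := by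
  cases X; exact h.1

lemma of_mo_N {K : PG} (h : mo K = Outcome.N) : (mw K).1 ∧ (mw K).2 := by
  unfold mo outcomeOf at h
  split_ifs at h with h1 h2 h2
  · exact ⟨h1, h2⟩

open PGame in
lemma mw_add_null (X : PG) (hl : IsEmpty X.LeftMoves) (hr : IsEmpty X.RightMoves) :
    ∀ K : PG, ((mw (K + X)).1 ↔ (mw K).1) ∧ ((mw (K + X)).2 ↔ (mw K).2) := by
  intro K
  induction K using PGame.moveRecOn with
  | _ K IHl IHr =>
  have keyL : ∀ k : (K + X).LeftMoves, ∃ i, (K + X).moveLeft k = K.moveLeft i + X := fun k =>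
    leftMoves_add_cases (P := fun k => ∃ i, (K + X).moveLeft k = K.moveLeft i + X) k
      (fun i => ⟨i, add_moveLeft_inl X i⟩) (fun i => (hl.false i).elim)
  have keyR : ∀ k : (K + X).RightMoves, ∃ j, (K + X).moveRight k = K.moveRight j + X := fun k =>
    rightMoves_add_cases (P := fun k => ∃ j, (K + X).moveRight k = K.moveRight j + X) k
      (fun j => ⟨j, add_moveRight_inl X j⟩) (fun j => (hr.false j).elim)
  constructor
  · rw [mw1 (K + X), mw1 K]
    constructor
    · rintro (hE | ⟨k, hk⟩)
      · exact Or.inl ⟨fun i => hE.false (toLeftMovesAdd (Sum.inl i))⟩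
      · obtain ⟨i, hi⟩ := keyL k
        rw [hi] at hk
        exact Or.inr ⟨i, fun hc => hk (((IHl i).2).mpr hc)⟩
    · rintro (hE | ⟨i, hi⟩)
      · exact Or.inl ⟨fun k => (keyL k).elim (fun i _ => hE.false i)⟩
      · refine Or.inr ⟨toLeftMovesAdd (Sum.inl i), ?_⟩
        rw [add_moveLeft_inl]
        exact fun hc => hi (((IHl i).2).mp hc)
  · rw [mw2 (K + X), mw2 K]
    constructor
    · rintro (hE | ⟨k, hk⟩)
      · exact Or.inl ⟨fun j => hE.false (toRightMovesAdd (Sum.inl j))⟩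
      · obtain ⟨j, hj⟩ := keyR k
        rw [hj] at hk
        exact Or.inr ⟨j, fun hc => hk (((IHr j).1).mpr hc)⟩
    · rintro (hE | ⟨j, hj⟩)
      · exact Or.inl ⟨fun k => (keyR k).elim (fun j _ => hE.false j)⟩
      · refine Or.inr ⟨toRightMovesAdd (Sum.inl j), ?_⟩
        rw [add_moveRight_inl]
        exact fun hc => hj (((IHr j).1).mp hc)

open PGame in
lemma main : ∀ X : PG, Dicot X → ∀ G : PG,
    mo (G + -G) = Outcome.N → (∀ H, PGame.Subsequent H G → mo (H + -H) = Outcome.N) →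
    ((mw X).1 → (mw (G + -G + X)).1) ∧ ((mw X).2 → (mw (G + -G + X)).2) ∧
    (¬ (mw X).1 → ¬ (mw (G + -G + X)).1) ∧ (¬ (mw X).2 → ¬ (mw (G + -G + X)).2) := by
  intro X
  induction X using PGame.moveRecOn with
  | _ X IHXl IHXr =>
  intro hX G
  induction G using PGame.moveRecOn with
  | _ G IHGl IHGr =>
  intro hN hfoll
  have BGL : ∀ i : G.LeftMoves,
      (¬ (mw X).1 → ¬ (mw (G.moveLeft i + -G.moveLeft i + X)).1) ∧
      (¬ (mw X).2 → ¬ (mw (G.moveLeft i + -G.moveLeft i + X)).2) := by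
    intro i
    have h := IHGl i (hfoll _ (Subsequent.moveLeft i))
      (fun H hH => hfoll H (hH.trans (Subsequent.moveLeft i)))
    exact ⟨h.2.2.1, h.2.2.2⟩
  have BGR : ∀ j : G.RightMoves,
      (¬ (mw X).1 → ¬ (mw (G.moveRight j + -G.moveRight j + X)).1) ∧
      (¬ (mw X).2 → ¬ (mw (G.moveRight j + -G.moveRight j + X)).2) := by
    intro j
    have h := IHGr j (hfoll _ (Subsequent.moveRight j))
      (fun H hH => hfoll H (hH.trans (Subsequent.moveRight j)))
    exact ⟨h.2.2.1, h.2.2.2⟩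
  have PXl := fun i : X.LeftMoves => IHXl i (dicot_moveLeft hX i) G hN hfoll
  have PXr := fun j : X.RightMoves => IHXr j (dicot_moveRight hX j) G hN hfoll
  refine ⟨?_, ?_, ?_, ?_⟩
  · -- A : Left wins X first ⇒ Left wins G + -G + X first
    intro h1
    rcases (mw1 X).mp h1 with hE | ⟨i, hi⟩
    · have hER : IsEmpty X.RightMoves := by
        rcases dicot_both hX with ⟨_, h⟩ | ⟨h, _⟩
        · exact h
        · exact absurd h (not_nonempty_iff.mpr hE)
      exact ((mw_add_null X hE hER (G + -G)).1).mpr (of_mo_N hN).1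
    · refine mw1_of_move (toLeftMovesAdd (Sum.inr i)) ?_
      rw [add_moveLeft_inr]
      exact (PXl i).2.2.2 hi
  · -- Ā : Right wins X first ⇒ Right wins G + -G + X first
    intro h2
    rcases (mw2 X).mp h2 with hE | ⟨j, hj⟩
    · have hEL : IsEmpty X.LeftMoves := by
        rcases dicot_both hX with ⟨h, _⟩ | ⟨_, h⟩
        · exact h
        · exact absurd h (not_nonempty_iff.mpr hE)
      exact ((mw_add_null X hEL hE (G + -G)).2).mpr (of_mo_N hN).2
    · refine mw2_of_move (toRightMovesAdd (Sum.inr j)) ?_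
      rw [add_moveRight_inr]
      exact (PXr j).2.2.1 hj
  · -- B̄ : Right wins X second ⇒ Right wins G + -G + X second
    intro h1
    obtain ⟨⟨i0⟩, hall⟩ := not_mw1.mp h1
    rw [not_mw1]
    refine ⟨⟨toLeftMovesAdd (Sum.inr i0)⟩, fun k => ?_⟩
    refine leftMoves_add_cases (P := fun k => (mw ((G + -G + X).moveLeft k)).2) k ?_ ?_
    · intro k'
      rw [add_moveLeft_inl]
      refine leftMoves_add_cases (P := fun k' => (mw ((G + -G).moveLeft k' + X)).2) k' ?_ ?_
      · -- Left moved in G : mirror in -G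
        intro i
        rw [add_moveLeft_inl]
        refine mw2_of_move
          (toRightMovesAdd (Sum.inl (toRightMovesAdd (Sum.inr (toRightMovesNeg i))))) ?_
        rw [add_moveRight_inl, add_moveRight_inr, moveRight_neg]
        exact (BGL i).1 h1
      · -- Left moved in -G : mirror in G
        intro i
        rw [add_moveLeft_inr, moveLeft_neg']
        refine mw2_of_move
          (toRightMovesAdd (Sum.inl (toRightMovesAdd (Sum.inl (toLeftMovesNeg.symm i))))) ?_
        rw [add_moveRight_inl, add_moveRight_inl]
        exact (BGR _).1 h1
    · -- Left moved in X
      intro i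
      rw [add_moveLeft_inr]
      exact (PXl i).2.1 (hall i)
  · -- B : Left wins X second ⇒ Left wins G + -G + X second
    intro h2
    obtain ⟨⟨j0⟩, hall⟩ := not_mw2.mp h2
    rw [not_mw2]
    refine ⟨⟨toRightMovesAdd (Sum.inr j0)⟩, fun k => ?_⟩
    refine rightMoves_add_cases (P := fun k => (mw ((G + -G + X).moveRight k)).1) k ?_ ?_
    · intro k'
      rw [add_moveRight_inl]
      refine rightMoves_add_cases (P := fun k' => (mw ((G + -G).moveRight k' + X)).1) k' ?_ ?_
      · -- Right moved in G : mirror in -G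
        intro j
        rw [add_moveRight_inl]
        refine mw1_of_move
          (toLeftMovesAdd (Sum.inl (toLeftMovesAdd (Sum.inr (toLeftMovesNeg j))))) ?_
        rw [add_moveLeft_inl, add_moveLeft_inr, moveLeft_neg]
        exact (BGR j).2 h2
      · -- Right moved in -G : mirror in G
        intro j
        rw [add_moveRight_inr, moveRight_neg']
        refine mw1_of_move
          (toLeftMovesAdd (Sum.inl (toLeftMovesAdd (Sum.inl (toRightMovesNeg.symm j))))) ?_
        rw [add_moveLeft_inl, add_moveLeft_inl]
        exact (BGL _).2 h2
    · -- Right moved in X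
      intro j
      rw [add_moveRight_inr]
      exact (PXr j).1 (hall j)

/-- If `G + Ḡ ∈ N⁻` and `H + H̄ ∈ N⁻` for every follower `H` of `G`, then
`G + Ḡ ≡ 0 (mod D)`. -/
theorem stmt2 (G : PG) (hG : mo (G + -G) = Outcome.N)
    (hfollowers : ∀ H : PG, PGame.Subsequent H G → mo (H + -H) = Outcome.N) :
    ∀ X : PG, Dicot X → mo (G + -G + X) = mo X := by
  intro X hXd
  obtain ⟨A1, A2, B1, B2⟩ := main X hXd G hG hfollowers
  have e1 : (mw (G + -G + X)).1 = (mw X).1 :=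
    propext ⟨fun h => Classical.byContradiction fun hn => B1 hn h, A1⟩
  have e2 : (mw (G + -G + X)).2 = (mw X).2 :=
    propext ⟨fun h => Classical.byContradiction fun hn => B2 hn h, A2⟩
  unfold mo
  rw [e1, e2]

end Sprigs
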